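/- Let F : ℝ² → ℝ be F(x,y) = |x| − |y|. Then lim_{λ→∞} λ·E_λ(F)(0,0) = 1/2, where E_λ(F) = C^u_λ(F) − C^l_λ(F). -/

import Mathlib

open Filter Metric Set
open scoped Topology RealInnerProductSpace

/-- The convex envelope of `g`: pointwise supremum of convex functions below `g`. -/
noncomputable def convEnv {E : Type*} [NormedAddCommGroup E] [NormedSpace ℝ E]
    (g : E → ℝ) (x : E) : ℝ :=
  sSup {y : ℝ | ∃ h : E → ℝ, ConvexOn ℝ Set.univ h ∧ (∀ z, h z ≤ g z) ∧ y = h x}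

/-- Upper compensated convex transform. -/
noncomputable def upperT {E : Type*} [NormedAddCommGroup E] [NormedSpace ℝ E]
    (lam : ℝ) (g : E → ℝ) (x : E) : ℝ :=
  lam * ‖x‖ ^ 2 - convEnv (fun y => lam * ‖y‖ ^ 2 - g y) x

/-- Lower compensated convex transform. -/
noncomputable def lowerT {E : Type*} [NormedAddCommGroup E] [NormedSpace ℝ E]
    (lam : ℝ) (g : E → ℝ) (x : E) : ℝ :=
  convEnv (fun y => g y + lam * ‖y‖ ^ 2) x - lam * ‖x‖ ^ 2

lemma norm_sq_E2 (z : EuclideanSpace ℝ (Fin 2)) : ‖z‖ ^ 2 = (z 0) ^ 2 + (z 1) ^ 2 := by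
  rw [EuclideanSpace.norm_eq, Real.sq_sqrt (by positivity)]
  simp [Fin.sum_univ_two, Real.norm_eq_abs, sq_abs]

lemma abs_coord_convex (j : Fin 2) (c : ℝ) :
    ConvexOn ℝ Set.univ (fun z : EuclideanSpace ℝ (Fin 2) => |z j| + c) := by
  refine ⟨convex_univ, fun x _ y _ a b ha hb hab => ?_⟩
  have hx : (a • x + b • y) j = a * x j + b * y j := rfl
  dsimp only
  rw [hx]
  calc |a * x j + b * y j| + c ≤ (|a * x j| + |b * y j|) + c := by
        gcongr; exact abs_add_le _ _
    _ = a * |x j| + b * |y j| + c := by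
        rw [abs_mul, abs_mul, abs_of_nonneg ha, abs_of_nonneg hb]
    _ ≤ a • (|x j| + c) + b • (|y j| + c) := by
        simp only [smul_eq_mul]
        have hc : a * c + b * c = c := by rw [← add_mul, hab, one_mul]
        nlinarith [hc]

lemma env_eq (lam : ℝ) (hlam : 0 < lam) (i j : Fin 2) (hij : j ≠ i) :
    convEnv (fun z : EuclideanSpace ℝ (Fin 2) => lam * ‖z‖ ^ 2 - |z i| + |z j|) 0
      = -(1 / (4 * lam)) := by
  set g : EuclideanSpace ℝ (Fin 2) → ℝ := fun z => lam * ‖z‖ ^ 2 - |z i| + |z j| with hg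
  set S := {y : ℝ | ∃ h : EuclideanSpace ℝ (Fin 2) → ℝ,
      ConvexOn ℝ Set.univ h ∧ (∀ z, h z ≤ g z) ∧ y = h 0} with hS
  have hle : ∀ y ∈ S, y ≤ -(1 / (4 * lam)) := by
    rintro y ⟨h, hconv, hbelow, rfl⟩
    set a : EuclideanSpace ℝ (Fin 2) := EuclideanSpace.single i (1 / (2 * lam)) with ha
    have hai : a i = 1 / (2 * lam) := by simp [ha]
    have haj : a j = 0 := by simp [ha, EuclideanSpace.single_apply, hij]
    have hna : ‖a‖ ^ 2 = (1 / (2 * lam)) ^ 2 := by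
      rw [norm_sq_E2]
      fin_cases i <;> fin_cases j <;> simp_all
    have hga : g a = -(1 / (4 * lam)) := by
      rw [hg]; simp only [hna, hai, haj, abs_zero]
      rw [abs_of_nonneg (by positivity)]
      field_simp; ring
    have hgna : g (-a) = -(1 / (4 * lam)) := by
      rw [hg]
      have h1 : (-a) i = -(1 / (2 * lam)) := by rw [show (-a) i = -(a i) from rfl, hai]
      have h2 : (-a) j = 0 := by rw [show (-a) j = -(a j) from rfl, haj, neg_zero]
      simp only [norm_neg, hna, h1, h2, abs_zero, abs_neg]
      rw [abs_of_nonneg (by positivity)]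
      field_simp; ring
    have hmid : h 0 ≤ (1/2 : ℝ) * h a + (1/2 : ℝ) * h (-a) := by
      have := hconv.2 (mem_univ a) (mem_univ (-a)) (by norm_num : (0:ℝ) ≤ 1/2)
        (by norm_num : (0:ℝ) ≤ 1/2) (by norm_num)
      have hz : (1/2 : ℝ) • a + (1/2 : ℝ) • (-a) = 0 := by
        rw [smul_neg]; abel
      rw [hz] at this
      simpa using this
    have h1 := hbelow a
    have h2 := hbelow (-a)
    rw [hga] at h1; rw [hgna] at h2
    linarith
  have hmem : -(1 / (4 * lam)) ∈ S := by
    refine ⟨fun z => |z j| + -(1 / (4 * lam)), abs_coord_convex j _, fun z => ?_, by simp⟩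
    dsimp only
    rw [hg]
    have hn := norm_sq_E2 z
    have hsq : lam * (|z i| - 1 / (2 * lam)) ^ 2 ≥ 0 := by positivity
    have hi01 : i = 0 ∨ i = 1 := by omega
    have hzi : (z i) ^ 2 ≤ ‖z‖ ^ 2 := by
      rw [hn]; rcases hi01 with rfl | rfl <;> nlinarith [sq_nonneg (z 0), sq_nonneg (z 1)]
    have habs : |z i| ^ 2 = (z i) ^ 2 := sq_abs _
    have : lam * (|z i|)^2 - |z i| + 1/(4*lam) ≥ 0 := by
      have expand : lam * (|z i| - 1 / (2 * lam)) ^ 2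
          = lam * |z i|^2 - |z i| + 1/(4*lam) := by
        field_simp
        ring
      linarith [expand ▸ hsq]
    nlinarith [abs_nonneg (z j)]
  refine le_antisymm (csSup_le ⟨_, hmem⟩ hle) (le_csSup ⟨_, hle⟩ hmem)

theorem stmt_17 :
    Tendsto (fun lam : ℝ => lam *
        (upperT lam (fun p : EuclideanSpace ℝ (Fin 2) => |p 0| - |p 1|) 0 -
         lowerT lam (fun p : EuclideanSpace ℝ (Fin 2) => |p 0| - |p 1|) 0))
      atTop (nhds (1 / 2)) := by
  have key : ∀ᶠ lam : ℝ in atTop, lam *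
        (upperT lam (fun p : EuclideanSpace ℝ (Fin 2) => |p 0| - |p 1|) 0 -
         lowerT lam (fun p : EuclideanSpace ℝ (Fin 2) => |p 0| - |p 1|) 0) = 1 / 2 := by
    filter_upwards [eventually_gt_atTop (0:ℝ)] with lam hlam
    have hA : (fun z : EuclideanSpace ℝ (Fin 2) => lam * ‖z‖ ^ 2 - (|z 0| - |z 1|))
        = (fun z : EuclideanSpace ℝ (Fin 2) => lam * ‖z‖ ^ 2 - |z 0| + |z 1|) := by
      funext z; ring
    have hB : (fun z : EuclideanSpace ℝ (Fin 2) => (|z 0| - |z 1|) + lam * ‖z‖ ^ 2)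
        = (fun z : EuclideanSpace ℝ (Fin 2) => lam * ‖z‖ ^ 2 - |z 1| + |z 0|) := by
      funext z; ring
    have e1 := env_eq lam hlam 0 1 (by decide)
    have e2 := env_eq lam hlam 1 0 (by decide)
    rw [upperT, lowerT, hA, hB, e1, e2]
    simp only [norm_zero]
    field_simp
    ring
  exact Tendsto.congr' (EventuallyEq.symm key) tendsto_const_nhds
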